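/- Let d ≥ 1 and let (J_λ)_{λ > 0} be a family of functions J_λ : ℤ^d → ℝ, each satisfying J_λ(0) = 0, J_λ(−x) = J_λ(x) for all x, Σ_{x ∈ ℤ^d} |J_λ(x)| < ∞ and Σ_{x ∈ ℤ^d} J_λ(x) = 1, with (real-valued) Fourier transform Ĵ_λ(k) = Σ_{x ∈ ℤ^d} J_λ(x) e^{i k·x} for k ∈ [−π, π]^d. Assume: (1) there exist δ > 0, C > 0 and λ₀ > 0 such that 1 − Ĵ_λ(k) ≥ C |k|^{d−δ} for all 0 < λ ≤ λ₀ and all k ∈ [−π, π]^d \ {0}, where |k| is the Euclidean norm; (2) Σ_{x ∈ ℤ^d} J_λ(x)² → 0 as λ ↓ 0. Then ∫_{[−π,π]^d} Ĵ_λ(k)² / (1 − Ĵ_λ(k)) dk/(2π)^d → 0 as λ ↓ 0. -/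

import Mathlib

open Real Set Filter Topology MeasureTheory

noncomputable section

/-- The (real-valued) Fourier transform `Ĵ(k) = Σ_x J(x) e^{i k·x}` of an even,
absolutely summable `J : ℤ^d → ℝ`; by evenness it equals `Σ_x J(x) cos(k·x)`. -/
noncomputable def jhat (d : ℕ) (J : (Fin d → ℤ) → ℝ) (k : Fin d → ℝ) : ℝ :=
  ∑' x : Fin d → ℤ, J x * Real.cos (∑ i, k i * (x i : ℝ))

/-- The Brillouin zone `[-π, π]^d`. -/
def brillouin (d : ℕ) : Set (Fin d → ℝ) :=
  Icc (fun _ => -π) (fun _ => π)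

/-- The infrared integral `I(J) = ∫_{[-π,π]^d} Ĵ(k)²/(1-Ĵ(k)) dk/(2π)^d`. -/
noncomputable def irIntegral (d : ℕ) (J : (Fin d → ℤ) → ℝ) : ℝ :=
  (1 / (2 * π) ^ d) * ∫ k in brillouin d, jhat d J k ^ 2 / (1 - jhat d J k)

lemma measurableSet_brillouin (d : ℕ) : MeasurableSet (brillouin d) :=
  measurableSet_Icc

lemma exp_int_Icc (m : ℤ) :
    ∫ t in Icc (-π) π, Complex.exp (t * m * Complex.I) =
      if m = 0 then ((2 * π : ℝ) : ℂ) else 0 := by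
  rcases eq_or_ne m 0 with hm | hm
  · subst hm
    simp only [Int.cast_zero, mul_zero, zero_mul, Complex.exp_zero, if_true]
    rw [setIntegral_const, measureReal_def, Real.volume_Icc]
    rw [ENNReal.toReal_ofReal (by linarith [Real.pi_pos]), Complex.real_smul]
    push_cast
    ring
  · rw [if_neg hm]
    rw [integral_Icc_eq_integral_Ioc, ← intervalIntegral.integral_of_le (by linarith [Real.pi_pos])]
    have hc : ((m : ℂ) * Complex.I) ≠ 0 := by
      simp [Complex.ext_iff, hm]
    have : ∀ t : ℝ, Complex.exp (t * m * Complex.I) = Complex.exp ((m * Complex.I) * t) := by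
      intro t; ring_nf
    rw [intervalIntegral.integral_congr (fun t _ => this t)]
    rw [integral_exp_mul_complex hc]
    have h1 : (m : ℂ) * Complex.I * (π : ℝ) = ((m : ℂ) * π) * Complex.I := by ring
    have h2 : (m : ℂ) * Complex.I * ((-π : ℝ) : ℂ) = (-((m : ℂ) * π)) * Complex.I := by
      push_cast; ring
    rw [h1, h2, Complex.exp_mul_I, Complex.exp_mul_I, Complex.sin_neg, Complex.cos_neg]
    rw [Complex.sin_int_mul_pi]
    ring

lemma integral_cos_brillouin (d : ℕ) (z : Fin d → ℤ) :
    ∫ k in brillouin d, Real.cos (∑ i, k i * (z i : ℝ)) =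
      if z = 0 then (2 * π) ^ d else 0 := by
  classical
  set F : Fin d → ℝ → ℂ := fun i t =>
    Set.indicator (Icc (-π) π) (fun s => Complex.exp (s * (z i : ℝ) * Complex.I)) t with hF
  have key : (∫ k in brillouin d,
      Complex.exp ((↑(∑ i, k i * (z i : ℝ)) : ℂ) * Complex.I)) =
      if z = 0 then (((2 * π) ^ d : ℝ) : ℂ) else 0 := by
    rw [← integral_indicator (measurableSet_brillouin d)]
    have hpt : ∀ k : Fin d → ℝ,
        Set.indicator (brillouin d)
          (fun k => Complex.exp ((↑(∑ i, k i * (z i : ℝ)) : ℂ) * Complex.I)) k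
          = ∏ i, F i (k i) := by
      intro k
      by_cases hk : k ∈ brillouin d
      · rw [Set.indicator_of_mem hk]
        have hki : ∀ i, k i ∈ Icc (-π) π := fun i => ⟨hk.1 i, hk.2 i⟩
        have : ∀ i, F i (k i) = Complex.exp ((k i : ℂ) * (z i : ℂ) * Complex.I) := by
          intro i
          rw [hF]; simp only [Set.indicator_of_mem (hki i)]
          norm_cast
        rw [Finset.prod_congr rfl (fun i _ => this i), ← Complex.exp_sum]
        congr 1
        push_cast
        rw [Finset.sum_mul]
      · rw [Set.indicator_of_notMem hk]
        have hex : ¬ ∀ i, k i ∈ Icc (-π) π := fun h =>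
          hk ⟨fun i => (h i).1, fun i => (h i).2⟩
        push_neg at hex
        obtain ⟨i, hi⟩ := hex
        refine (Finset.prod_eq_zero (Finset.mem_univ i) ?_).symm
        rw [hF]; simp only [Set.indicator_of_notMem hi]
    rw [show (fun k => Set.indicator (brillouin d)
          (fun k => Complex.exp ((↑(∑ i, k i * (z i : ℝ)) : ℂ) * Complex.I)) k)
        = fun k => ∏ i, F i (k i) from funext hpt]
    rw [MeasureTheory.integral_fintype_prod_volume_eq_prod (𝕜 := ℂ) F]
    have hfi : ∀ i, (∫ t : ℝ, F i t) = if z i = 0 then ((2 * π : ℝ) : ℂ) else 0 := by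
      intro i
      rw [hF]
      rw [integral_indicator measurableSet_Icc]
      exact exp_int_Icc (z i)
    rw [Finset.prod_congr rfl (fun i _ => hfi i)]
    by_cases hz : z = 0
    · subst hz
      simp [Finset.prod_const]
    · have hex : ∃ i, z i ≠ 0 := by
        by_contra h
        push_neg at h
        exact hz (funext h)
      obtain ⟨i, hi⟩ := hex
      rw [if_neg hz]
      exact Finset.prod_eq_zero (Finset.mem_univ i) (by rw [if_neg hi])
  have hInt : Integrable
      (fun k : Fin d → ℝ => Complex.exp ((↑(∑ i, k i * (z i : ℝ)) : ℂ) * Complex.I))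
      (volume.restrict (brillouin d)) := by
    refine ContinuousOn.integrableOn_compact isCompact_Icc ?_
    apply Continuous.continuousOn
    fun_prop
  have hre := integral_re hInt
  rw [key] at hre
  have h2 : RCLike.re (if z = 0 then (((2 * π) ^ d : ℝ) : ℂ) else 0)
      = (if z = 0 then (2 * π) ^ d else 0 : ℝ) := by
    by_cases hz : z = 0
    · rw [if_pos hz, if_pos hz, RCLike.re_eq_complex_re, Complex.ofReal_re]
    · rw [if_neg hz, if_neg hz]; simp
  rw [h2] at hre
  rw [← hre]
  refine integral_congr_ae (ae_of_all _ (fun k => ?_))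
  exact (Complex.exp_ofReal_mul_I_re _).symm

lemma jhat_continuous (d : ℕ) (J : (Fin d → ℤ) → ℝ) (hs : Summable fun x => |J x|) :
    Continuous (jhat d J) := by
  refine continuous_tsum (fun x => ?_) hs (fun n k => ?_)
  · exact continuous_const.mul (Real.continuous_cos.comp (by fun_prop))
  · rw [Real.norm_eq_abs, abs_mul]
    calc |J n| * |Real.cos (∑ i, k i * (n i : ℝ))| ≤ |J n| * 1 := by
          gcongr; exact Real.abs_cos_le_one _
      _ = |J n| := mul_one _

lemma jhat_zero (d : ℕ) (J : (Fin d → ℤ) → ℝ) (hnorm : ∑' x, J x = 1) :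
    jhat d J 0 = 1 := by
  unfold jhat
  simp only [Pi.zero_apply, zero_mul, Finset.sum_const_zero, Real.cos_zero, mul_one]
  exact hnorm

lemma vol_brillouin (d : ℕ) : volume (brillouin d) = ENNReal.ofReal (2 * π) ^ d := by
  rw [brillouin, ← pi_univ_Icc, volume_pi_pi]
  simp [Real.volume_Icc, two_mul]

lemma vol_brillouin_toReal (d : ℕ) : (volume (brillouin d)).toReal = (2 * π) ^ d := by
  rw [vol_brillouin, ENNReal.toReal_pow, ENNReal.toReal_ofReal (by positivity)]

lemma parseval (d : ℕ) (J : (Fin d → ℤ) → ℝ) (hs : Summable fun x => |J x|)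
    (he : ∀ x, J (-x) = J x) :
    ∫ k in brillouin d, (jhat d J k) ^ 2 = (2 * π) ^ d * ∑' x, J x ^ 2 := by
  classical
  set a : (Fin d → ℤ) → (Fin d → ℝ) → ℝ :=
    fun x k => J x * Real.cos (∑ i, k i * (x i : ℝ)) with ha
  have hanorm : ∀ x k, ‖a x k‖ ≤ |J x| := by
    intro x k
    rw [ha, Real.norm_eq_abs, abs_mul]
    calc |J x| * |Real.cos (∑ i, k i * (x i : ℝ))| ≤ |J x| * 1 := by
          gcongr; exact Real.abs_cos_le_one _
      _ = |J x| := mul_one _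
  have hsk : ∀ k, Summable fun x => ‖a x k‖ :=
    fun k => Summable.of_nonneg_of_le (fun _ => norm_nonneg _) (fun x => hanorm x k) hs
  -- step 1 : expand the square
  have hsq : ∀ k, (jhat d J k) ^ 2 = ∑' p : (Fin d → ℤ) × (Fin d → ℤ), a p.1 k * a p.2 k := by
    intro k
    rw [pow_two]
    exact tsum_mul_tsum_of_summable_norm (hsk k) (hsk k)
  rw [setIntegral_congr_fun (measurableSet_brillouin d) (fun k _ => hsq k)]
  -- step 2 : swap sum and integral
  have haint : ∀ x, IntegrableOn (a x) (brillouin d) volume := by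
    intro x
    refine ContinuousOn.integrableOn_compact isCompact_Icc ?_
    exact (continuous_const.mul (Real.continuous_cos.comp (by fun_prop))).continuousOn
  have hGcont : ∀ p : (Fin d → ℤ) × (Fin d → ℤ),
      Continuous (fun k => a p.1 k * a p.2 k) := by
    intro p
    exact ((continuous_const.mul (Real.continuous_cos.comp (by fun_prop))).mul
      (continuous_const.mul (Real.continuous_cos.comp (by fun_prop))))
  have hGint : ∀ p : (Fin d → ℤ) × (Fin d → ℤ),
      Integrable (fun k => a p.1 k * a p.2 k) (volume.restrict (brillouin d)) :=
    fun p => ContinuousOn.integrableOn_compact isCompact_Icc (hGcont p).continuousOn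
  have hGbound : ∀ p : (Fin d → ℤ) × (Fin d → ℤ),
      (∫ k in brillouin d, ‖a p.1 k * a p.2 k‖) ≤ (2 * π) ^ d * (|J p.1| * |J p.2|) := by
    intro p
    have : ∀ k ∈ brillouin d, ‖a p.1 k * a p.2 k‖ ≤ |J p.1| * |J p.2| := by
      intro k _
      rw [norm_mul]
      exact mul_le_mul (hanorm _ _) (hanorm _ _) (norm_nonneg _) (abs_nonneg _)
    calc (∫ k in brillouin d, ‖a p.1 k * a p.2 k‖)
        ≤ ∫ _ in brillouin d, |J p.1| * |J p.2| := by
          refine setIntegral_mono_on (hGint p).norm (integrableOn_const ?_)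
            (measurableSet_brillouin d) this
          refine ne_of_lt ?_
          rw [vol_brillouin]
          exact ENNReal.pow_lt_top ENNReal.ofReal_lt_top
      _ = (2 * π) ^ d * (|J p.1| * |J p.2|) := by
          rw [setIntegral_const, measureReal_def, vol_brillouin_toReal, smul_eq_mul]
  have hGsum : Summable fun p : (Fin d → ℤ) × (Fin d → ℤ) =>
      ∫ k in brillouin d, ‖a p.1 k * a p.2 k‖ := by
    refine Summable.of_nonneg_of_le
      (fun p => integral_nonneg (fun k => norm_nonneg _)) hGbound ?_
    exact ((hs.mul_of_nonneg hs (fun x => abs_nonneg _) (fun x => abs_nonneg _)).mul_left _)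
  rw [← integral_tsum_of_summable_integral_norm hGint hGsum]
  -- step 3 : compute each integral
  have hcc : ∀ x y : ℝ, Real.cos x * Real.cos y = (Real.cos (x - y) + Real.cos (x + y)) / 2 := by
    intro x y
    rw [Real.cos_sub, Real.cos_add]
    ring
  have hint : ∀ p : (Fin d → ℤ) × (Fin d → ℤ),
      (∫ k in brillouin d, a p.1 k * a p.2 k) =
        J p.1 * J p.2 *
          (((if p.1 - p.2 = 0 then (2 * π) ^ d else 0) +
            (if p.1 + p.2 = 0 then (2 * π) ^ d else 0)) / 2) := by
    intro p
    have h1 : ∀ k : Fin d → ℝ, a p.1 k * a p.2 k =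
        (J p.1 * J p.2) *
          ((Real.cos (∑ i, k i * ((p.1 - p.2) i : ℝ)) +
            Real.cos (∑ i, k i * ((p.1 + p.2) i : ℝ))) / 2) := by
      intro k
      rw [ha]
      have hd : (∑ i, k i * (p.1 i : ℝ)) - (∑ i, k i * (p.2 i : ℝ))
          = ∑ i, k i * ((p.1 - p.2) i : ℝ) := by
        rw [← Finset.sum_sub_distrib]
        congr 1; ext i; push_cast [Pi.sub_apply]; ring
      have hsum : (∑ i, k i * (p.1 i : ℝ)) + (∑ i, k i * (p.2 i : ℝ))
          = ∑ i, k i * ((p.1 + p.2) i : ℝ) := by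
        rw [← Finset.sum_add_distrib]
        congr 1; ext i; push_cast [Pi.add_apply]; ring
      rw [← hd, ← hsum, ← hcc]
      ring
    rw [setIntegral_congr_fun (measurableSet_brillouin d) (fun k _ => h1 k)]
    rw [integral_const_mul]
    congr 1
    have hci : ∀ z : Fin d → ℤ, IntegrableOn
        (fun k : Fin d → ℝ => Real.cos (∑ i, k i * (z i : ℝ))) (brillouin d) volume := by
      intro z
      exact ContinuousOn.integrableOn_compact isCompact_Icc
        ((Real.continuous_cos.comp (by fun_prop)).continuousOn)
    rw [integral_div, integral_add (hci _) (hci _), integral_cos_brillouin,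
      integral_cos_brillouin]
  rw [tsum_congr hint]
  -- step 4 : evaluate the sum of deltas
  set c : ℝ := (2 * π) ^ d / 2 with hc
  set T1 : (Fin d → ℤ) × (Fin d → ℤ) → ℝ :=
    fun p => if p.2 = p.1 then c * (J p.1 * J p.2) else 0 with hT1
  set T2 : (Fin d → ℤ) × (Fin d → ℤ) → ℝ :=
    fun p => if p.2 = -p.1 then c * (J p.1 * J p.2) else 0 with hT2
  have hsplit : ∀ p : (Fin d → ℤ) × (Fin d → ℤ),
      J p.1 * J p.2 *
          (((if p.1 - p.2 = 0 then (2 * π) ^ d else 0) +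
            (if p.1 + p.2 = 0 then (2 * π) ^ d else 0)) / 2) = T1 p + T2 p := by
    intro p
    have e1 : (p.1 - p.2 = 0) ↔ (p.2 = p.1) := by
      rw [sub_eq_zero]; exact eq_comm
    have e2 : (p.1 + p.2 = 0) ↔ (p.2 = -p.1) := by
      rw [add_eq_zero_iff_eq_neg]
      exact ⟨fun h => by simp [h], fun h => by simp [h]⟩
    simp only [hT1, hT2, hc, e1, e2]
    split_ifs <;> ring
  rw [tsum_congr hsplit]
  -- summability of the diagonal pieces
  have hJ2 : Summable fun x : Fin d → ℤ => J x ^ 2 := by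
    refine Summable.of_nonneg_of_le (fun x => sq_nonneg _) (fun x => ?_) (hs.mul_left (∑' x, |J x|))
    rw [← sq_abs]
    calc |J x| ^ 2 = |J x| * |J x| := by ring
      _ ≤ (∑' x, |J x|) * |J x| := by
          gcongr
          exact Summable.le_tsum hs x (fun j _ => abs_nonneg _)
  have hinj1 : Function.Injective (fun x : Fin d → ℤ => (x, x)) :=
    fun x y h => (Prod.ext_iff.1 h).1
  have hinj2 : Function.Injective (fun x : Fin d → ℤ => (x, -x)) :=
    fun x y h => (Prod.ext_iff.1 h).1
  have hsupp1 : Function.support T1 ⊆ Set.range (fun x : Fin d → ℤ => (x, x)) := by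
    intro p hp
    by_cases h : p.2 = p.1
    · exact ⟨p.1, by rw [Prod.ext_iff]; exact ⟨rfl, h.symm⟩⟩
    · exact absurd (by simp [hT1, h]) hp
  have hsupp2 : Function.support T2 ⊆ Set.range (fun x : Fin d → ℤ => (x, -x)) := by
    intro p hp
    by_cases h : p.2 = -p.1
    · exact ⟨p.1, by rw [Prod.ext_iff]; exact ⟨rfl, h.symm⟩⟩
    · exact absurd (by simp [hT2, h]) hp
  have hc1 : ∀ x : Fin d → ℤ, c * J x ^ 2 = T1 (x, x) := by
    intro x
    simp only [hT1, if_pos rfl]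
    ring
  have hc2 : ∀ x : Fin d → ℤ, c * J x ^ 2 = T2 (x, -x) := by
    intro x
    simp only [hT2, if_pos rfl]
    rw [he x]
    ring
  have hsupp1' : ∀ p ∉ Set.range (fun x : Fin d → ℤ => (x, x)), T1 p = 0 := by
    intro p hp
    by_contra h
    exact hp (hsupp1 h)
  have hsupp2' : ∀ p ∉ Set.range (fun x : Fin d → ℤ => (x, -x)), T2 p = 0 := by
    intro p hp
    by_contra h
    exact hp (hsupp2 h)
  have hs1 : Summable T1 :=
    (hinj1.summable_iff hsupp1').1 ((hJ2.mul_left c).congr hc1)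
  have hs2 : Summable T2 :=
    (hinj2.summable_iff hsupp2').1 ((hJ2.mul_left c).congr hc2)
  rw [Summable.tsum_add hs1 hs2]
  have ht1 : ∑' p, T1 p = c * ∑' x, J x ^ 2 := by
    rw [← hinj1.tsum_eq hsupp1, ← tsum_mul_left]
    exact (tsum_congr hc1).symm
  have ht2 : ∑' p, T2 p = c * ∑' x, J x ^ 2 := by
    rw [← hinj2.tsum_eq hsupp2, ← tsum_mul_left]
    exact (tsum_congr hc2).symm
  rw [ht1, ht2, hc]
  ring

lemma norm_le_sqrt_sum_sq {d : ℕ} (k : Fin d → ℝ) :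
    ‖k‖ ≤ Real.sqrt (∑ i, k i ^ 2) := by
  refine (pi_norm_le_iff_of_nonneg (Real.sqrt_nonneg _)).2 (fun i => ?_)
  rw [Real.norm_eq_abs, ← Real.sqrt_sq_eq_abs]
  exact Real.sqrt_le_sqrt (Finset.single_le_sum (f := fun j => k j ^ 2)
    (fun j _ => sq_nonneg _) (Finset.mem_univ i))

lemma integrableOn_norm_rpow_ball (d : ℕ) (hd : 1 ≤ d) (e : ℝ) (he : 0 < e)
    (hed : e < d) (R : ℝ) :
    IntegrableOn (fun k : Fin d → ℝ => ‖k‖ ^ (-e)) (Metric.ball 0 R) volume := by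
  have hmeas : Measurable (fun k : Fin d → ℝ => ‖k‖ ^ (-e)) := by fun_prop
  constructor
  · exact hmeas.aestronglyMeasurable
  · rw [HasFiniteIntegral, lintegral_enorm_of_nonneg
      (fun k => Real.rpow_nonneg (norm_nonneg k) _)]
    set μ := volume.restrict (Metric.ball (0 : Fin d → ℝ) R) with hμ
    rw [lintegral_eq_lintegral_meas_le μ
      (ae_of_all _ (fun k => Real.rpow_nonneg (norm_nonneg k) _))
      hmeas.aemeasurable]
    have hsub : ∀ t : ℝ, 0 < t →
        {a : Fin d → ℝ | t ≤ ‖a‖ ^ (-e)} ⊆ Metric.closedBall 0 (t ^ (-e⁻¹)) := by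
      intro t ht a hat
      simp only [Set.mem_setOf_eq] at hat
      rcases eq_or_ne a 0 with rfl | ha
      · refine Metric.mem_closedBall.2 ?_
        rw [dist_self]
        positivity
      · have hna : 0 < ‖a‖ := norm_pos_iff.2 ha
        rw [Metric.mem_closedBall, dist_zero_right]
        have h1 : (‖a‖ ^ (-e)) ^ (-e⁻¹) ≤ t ^ (-e⁻¹) :=
          Real.rpow_le_rpow_of_nonpos ht hat (neg_nonpos.2 (inv_pos.2 he).le)
        rwa [← Real.rpow_mul hna.le, neg_mul_neg, mul_inv_cancel₀ he.ne',
          Real.rpow_one] at h1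
    have hb1 : ∀ t ∈ Ioc (0:ℝ) 1, μ {a : Fin d → ℝ | t ≤ ‖a‖ ^ (-e)}
        ≤ volume (Metric.ball (0 : Fin d → ℝ) R) := by
      intro t _
      calc μ {a : Fin d → ℝ | t ≤ ‖a‖ ^ (-e)} ≤ μ Set.univ := measure_mono (Set.subset_univ _)
        _ = volume (Metric.ball (0 : Fin d → ℝ) R) := by
            rw [hμ, Measure.restrict_apply_univ]
    have hb2 : ∀ t ∈ Ioi (1:ℝ), μ {a : Fin d → ℝ | t ≤ ‖a‖ ^ (-e)}
        ≤ ENNReal.ofReal (t ^ (-(e⁻¹ * d))) * volume (Metric.ball (0 : Fin d → ℝ) 1) := by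
      intro t ht
      have ht0 : (0:ℝ) < t := lt_trans one_pos ht
      calc μ {a : Fin d → ℝ | t ≤ ‖a‖ ^ (-e)}
          ≤ μ (Metric.closedBall 0 (t ^ (-e⁻¹))) := measure_mono (hsub t ht0)
        _ ≤ volume (Metric.closedBall (0 : Fin d → ℝ) (t ^ (-e⁻¹))) :=
            Measure.restrict_apply_le _ _
        _ = ENNReal.ofReal ((t ^ (-e⁻¹)) ^ (Module.finrank ℝ (Fin d → ℝ)))
              * volume (Metric.ball (0 : Fin d → ℝ) 1) :=
            Measure.addHaar_closedBall _ _ (by positivity)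
        _ = ENNReal.ofReal (t ^ (-(e⁻¹ * d))) * volume (Metric.ball (0 : Fin d → ℝ) 1) := by
            congr 2
            rw [Module.finrank_fintype_fun_eq_card, Fintype.card_fin,
              ← Real.rpow_natCast (t ^ (-e⁻¹)) d, ← Real.rpow_mul ht0.le]
            ring_nf
    calc ∫⁻ t in Ioi (0:ℝ), μ {a : Fin d → ℝ | t ≤ ‖a‖ ^ (-e)}
        ≤ ∫⁻ t in Ioc (0:ℝ) 1 ∪ Ioi 1, μ {a : Fin d → ℝ | t ≤ ‖a‖ ^ (-e)} :=
          lintegral_mono_set Ioi_subset_Ioc_union_Ioi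
      _ ≤ (∫⁻ t in Ioc (0:ℝ) 1, μ {a : Fin d → ℝ | t ≤ ‖a‖ ^ (-e)})
            + ∫⁻ t in Ioi (1:ℝ), μ {a : Fin d → ℝ | t ≤ ‖a‖ ^ (-e)} :=
          lintegral_union_le _ _ _
      _ < ⊤ := by
          refine ENNReal.add_lt_top.2 ⟨?_, ?_⟩
          · calc (∫⁻ t in Ioc (0:ℝ) 1, μ {a : Fin d → ℝ | t ≤ ‖a‖ ^ (-e)})
                ≤ ∫⁻ _ in Ioc (0:ℝ) 1, volume (Metric.ball (0 : Fin d → ℝ) R) :=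
                  setLIntegral_mono measurable_const hb1
              _ = volume (Metric.ball (0 : Fin d → ℝ) R) * volume (Ioc (0:ℝ) 1) := by
                  rw [setLIntegral_const]
              _ < ⊤ := by
                  refine ENNReal.mul_lt_top measure_ball_lt_top ?_
                  rw [Real.volume_Ioc]
                  exact ENNReal.ofReal_lt_top
          · calc (∫⁻ t in Ioi (1:ℝ), μ {a : Fin d → ℝ | t ≤ ‖a‖ ^ (-e)})
                ≤ ∫⁻ t in Ioi (1:ℝ),
                    ENNReal.ofReal (t ^ (-(e⁻¹ * d))) * volume (Metric.ball (0 : Fin d → ℝ) 1) :=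
                  setLIntegral_mono (by fun_prop) hb2
              _ = (∫⁻ t in Ioi (1:ℝ), ENNReal.ofReal (t ^ (-(e⁻¹ * d))))
                    * volume (Metric.ball (0 : Fin d → ℝ) 1) :=
                  lintegral_mul_const' _ _ measure_ball_lt_top.ne
              _ < ⊤ := by
                  refine ENNReal.mul_lt_top ?_ measure_ball_lt_top
                  refine IntegrableOn.setLIntegral_lt_top ?_
                  refine integrableOn_Ioi_rpow_of_lt ?_ one_pos
                  rw [neg_lt, neg_neg]
                  rw [inv_mul_eq_div]
                  exact (one_lt_div he).2 hed


lemma integrableOn_sqrtsum_rpow (d : ℕ) (hd : 1 ≤ d) (e : ℝ) (he : 0 < e) (hed : e < d) :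
    IntegrableOn (fun k : Fin d → ℝ => Real.sqrt (∑ i, k i ^ 2) ^ (-e))
      (brillouin d) volume := by
  have hsubset : brillouin d ⊆ Metric.ball 0 (π + 1) := by
    intro k hk
    rw [Metric.mem_ball, dist_zero_right]
    have : ‖k‖ ≤ π := by
      refine (pi_norm_le_iff_of_nonneg Real.pi_pos.le).2 (fun i => ?_)
      rw [Real.norm_eq_abs]
      exact abs_le.2 ⟨hk.1 i, hk.2 i⟩
    linarith
  have hmeas : Measurable (fun k : Fin d → ℝ => Real.sqrt (∑ i, k i ^ 2) ^ (-e)) := by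
    fun_prop
  refine Integrable.mono'
    ((integrableOn_norm_rpow_ball d hd e he hed (π + 1)).mono_set hsubset)
    hmeas.aestronglyMeasurable (ae_of_all _ (fun k => ?_))
  rw [Real.norm_eq_abs, abs_of_nonneg (Real.rpow_nonneg (Real.sqrt_nonneg _) _)]
  rcases eq_or_ne k 0 with rfl | hk
  · refine le_of_eq ?_
    congr 1
    simp
  · exact Real.rpow_le_rpow_of_nonpos (norm_pos_iff.2 hk) (norm_le_sqrt_sum_sq k)
      (neg_nonpos.2 he.le)

lemma tendsto_setIntegral_small_ball (d : ℕ) (hd : 1 ≤ d) (h0 : (Fin d → ℝ) → ℝ)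
    (hint : IntegrableOn h0 (brillouin d) volume) (h0nn : ∀ k, 0 ≤ h0 k) :
    Tendsto (fun n : ℕ => ∫ k in Metric.ball 0 (1 / (n + 1)) ∩ brillouin d, h0 k)
      atTop (𝓝 0) := by
  set μ := volume.restrict (brillouin d) with hμ
  set F : ℕ → (Fin d → ℝ) → ℝ :=
    fun n => Set.indicator (Metric.ball 0 (1 / (n + 1))) h0 with hF
  have hkey : ∀ n : ℕ, ∫ k, F n k ∂μ
      = ∫ k in Metric.ball 0 (1 / (n + 1)) ∩ brillouin d, h0 k := by
    intro n
    rw [hF, integral_indicator Metric.isOpen_ball.measurableSet, hμ,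
      Measure.restrict_restrict Metric.isOpen_ball.measurableSet]
  have hnull : μ ({0} : Set (Fin d → ℝ)) = 0 := by
    refine le_antisymm (le_trans (Measure.restrict_apply_le _ _) (le_of_eq ?_)) zero_le
    have : ({0} : Set (Fin d → ℝ)) = Set.pi Set.univ (fun _ => ({0} : Set ℝ)) := by
      ext x
      simp [funext_iff]
    rw [this, volume_pi_pi]
    simp only [Real.volume_singleton, Finset.prod_const]
    rw [Finset.card_univ, Fintype.card_fin]
    exact zero_pow (by omega)
  have := tendsto_integral_of_dominated_convergence (μ := μ) (F := F)
    (f := fun _ => (0:ℝ)) h0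
    (fun n => hint.1.indicator Metric.isOpen_ball.measurableSet)
    hint
    (fun n => ae_of_all _ (fun a => ?_))
    ?_
  · rw [integral_zero] at this
    exact this.congr hkey
  · by_cases hb : a ∈ Metric.ball (0 : Fin d → ℝ) (1 / (n + 1))
    · rw [hF]
      simp only [Set.indicator_of_mem hb, Real.norm_eq_abs, abs_of_nonneg (h0nn a)]
      exact le_rfl
    · rw [hF]
      simp only [Set.indicator_of_notMem hb, norm_zero]
      exact h0nn a
  · have hae : ∀ᵐ a ∂μ, a ≠ 0 := by
      rw [ae_iff]
      refine measure_mono_null (fun a ha => ?_) hnull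
      simpa using ha
    filter_upwards [hae] with a ha
    have hpos : 0 < ‖a‖ := norm_pos_iff.2 ha
    have hev : ∀ᶠ n : ℕ in atTop, F n a = 0 := by
      have ht : Tendsto (fun n : ℕ => 1 / ((n : ℝ) + 1)) atTop (𝓝 0) :=
        tendsto_one_div_add_atTop_nhds_zero_nat
      filter_upwards [ht.eventually_lt_const hpos] with n hn
      have hnot : a ∉ Metric.ball (0 : Fin d → ℝ) (1 / (n + 1)) := by
        rw [Metric.mem_ball, dist_zero_right]
        push_neg
        exact hn.le
      rw [hF]
      simp only [Set.indicator_of_notMem hnot]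
    exact Tendsto.congr' (by filter_upwards [hev] with n hn using hn.symm) tendsto_const_nhds

lemma sqrtsum_pos {d : ℕ} {k : Fin d → ℝ} (hk : k ≠ 0) :
    0 < Real.sqrt (∑ i, k i ^ 2) := by
  have : 0 < ‖k‖ := norm_pos_iff.2 hk
  exact lt_of_lt_of_le this (norm_le_sqrt_sum_sq k)

lemma jhat_nonneg_ratio (d : ℕ) (Jl : (Fin d → ℤ) → ℝ)
    (hnorm : ∑' x, Jl x = 1) (e C' : ℝ) (hC' : 0 < C')
    (hIR' : ∀ k ∈ brillouin d, k ≠ 0 →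
      C' * Real.sqrt (∑ i, k i ^ 2) ^ e ≤ 1 - jhat d Jl k) :
    ∀ k ∈ brillouin d, 0 ≤ jhat d Jl k ^ 2 / (1 - jhat d Jl k) := by
  intro k hk
  rcases eq_or_ne k 0 with rfl | hk0
  · rw [jhat_zero d Jl hnorm]
    norm_num
  · have hu : 0 < 1 - jhat d Jl k :=
      lt_of_lt_of_le (mul_pos hC' (Real.rpow_pos_of_pos (sqrtsum_pos hk0) e))
        (hIR' k hk hk0)
    exact div_nonneg (sq_nonneg _) hu.le

lemma irIntegral_nonneg (d : ℕ) (Jl : (Fin d → ℤ) → ℝ)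
    (hnorm : ∑' x, Jl x = 1) (e C' : ℝ) (hC' : 0 < C')
    (hIR' : ∀ k ∈ brillouin d, k ≠ 0 →
      C' * Real.sqrt (∑ i, k i ^ 2) ^ e ≤ 1 - jhat d Jl k) :
    0 ≤ irIntegral d Jl := by
  rw [irIntegral]
  refine mul_nonneg (by positivity) ?_
  exact setIntegral_nonneg (measurableSet_brillouin d)
    (jhat_nonneg_ratio d Jl hnorm e C' hC' hIR')

lemma key_bound (d : ℕ) (hd : 1 ≤ d) (Jl : (Fin d → ℤ) → ℝ)
    (hsumm : Summable fun x => |Jl x|) (hnorm : ∑' x, Jl x = 1)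
    (heven : ∀ x, Jl (-x) = Jl x)
    (e C' : ℝ) (he : 0 < e) (hed : e < d) (hC' : 0 < C')
    (hIR' : ∀ k ∈ brillouin d, k ≠ 0 →
      C' * Real.sqrt (∑ i, k i ^ 2) ^ e ≤ 1 - jhat d Jl k)
    (r : ℝ) (hr : 0 < r) :
    irIntegral d Jl ≤
      (1 / (2 * π) ^ d) * (∫ k in Metric.ball 0 r ∩ brillouin d,
          (C'⁻¹ * Real.sqrt (∑ i, k i ^ 2) ^ (-e) + 3 / 2))
        + (1 / 2 + (C' * r ^ e)⁻¹) * ∑' x, Jl x ^ 2 := by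
  set g := jhat d Jl with hg
  set E : (Fin d → ℝ) → ℝ := fun k => Real.sqrt (∑ i, k i ^ 2) with hE
  set h0 : (Fin d → ℝ) → ℝ := fun k => C'⁻¹ * E k ^ (-e) + 3 / 2 with hh0
  set f : (Fin d → ℝ) → ℝ := fun k => g k ^ 2 / (1 - g k) with hf
  set cf : ℝ := 1 / 2 + (C' * r ^ e)⁻¹ with hcf
  set h : (Fin d → ℝ) → ℝ :=
    fun k => Set.indicator (Metric.ball 0 r) h0 k + cf * g k ^ 2 with hh
  have hgc : Continuous g := jhat_continuous d Jl hsumm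
  have hcfpos : 0 < cf := by
    rw [hcf]
    have : 0 < (C' * r ^ e)⁻¹ := inv_pos.2 (mul_pos hC' (Real.rpow_pos_of_pos hr e))
    linarith
  have hh0nn : ∀ k, 0 ≤ h0 k := by
    intro k
    rw [hh0]
    have : 0 ≤ E k ^ (-e) := Real.rpow_nonneg (Real.sqrt_nonneg _) _
    have h2 : 0 ≤ C'⁻¹ := inv_nonneg.2 hC'.le
    nlinarith
  have hfnn : ∀ k ∈ brillouin d, 0 ≤ f k :=
    jhat_nonneg_ratio d Jl hnorm e C' hC' hIR'
  -- the pointwise bound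
  have hfh : ∀ k ∈ brillouin d, f k ≤ h k := by
    intro k hk
    rcases eq_or_ne k 0 with rfl | hk0
    · have : f 0 = 0 := by
        rw [hf, hg]
        simp only [jhat_zero d Jl hnorm]
        norm_num
      rw [this]
      simp only [hh]
      exact add_nonneg (Set.indicator_nonneg (fun a _ => hh0nn a) _)
        (mul_nonneg hcfpos.le (sq_nonneg _))
    · have hEpos : 0 < E k := sqrtsum_pos hk0
      have hule : C' * E k ^ e ≤ 1 - g k := hIR' k hk hk0
      have hu : 0 < 1 - g k :=
        lt_of_lt_of_le (mul_pos hC' (Real.rpow_pos_of_pos hEpos e)) hule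
      by_cases hball : k ∈ Metric.ball (0 : Fin d → ℝ) r
      · have h1 : f k ≤ (1 - g k)⁻¹ + (1 - g k) := by
          simp only [hf]
          rw [div_le_iff₀ hu, add_mul, inv_mul_cancel₀ hu.ne']
          nlinarith
        have h2 : (1 - g k)⁻¹ ≤ C'⁻¹ * E k ^ (-e) := by
          rw [Real.rpow_neg (Real.sqrt_nonneg _), ← mul_inv]
          exact inv_anti₀ (mul_pos hC' (Real.rpow_pos_of_pos hEpos e)) hule
        have h3 : 1 - g k ≤ 3 / 2 + 1 / 2 * g k ^ 2 := by nlinarith [sq_nonneg (g k + 1)]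
        have h4 : 1 / 2 * g k ^ 2 ≤ cf * g k ^ 2 := by
          refine mul_le_mul_of_nonneg_right ?_ (sq_nonneg _)
          rw [hcf]
          have : 0 ≤ (C' * r ^ e)⁻¹ :=
            inv_nonneg.2 (mul_pos hC' (Real.rpow_pos_of_pos hr e)).le
          linarith
        have h5 : h k = h0 k + cf * g k ^ 2 := by
          simp only [hh]
          rw [Set.indicator_of_mem hball]
        rw [h5, hh0]
        calc f k ≤ (1 - g k)⁻¹ + (1 - g k) := h1
          _ ≤ (C'⁻¹ * E k ^ (-e)) + (3 / 2 + 1 / 2 * g k ^ 2) := add_le_add h2 h3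
          _ ≤ C'⁻¹ * E k ^ (-e) + 3 / 2 + cf * g k ^ 2 := by linarith
      · have hrk : r ≤ ‖k‖ := by
          rw [Metric.mem_ball, dist_zero_right, not_lt] at hball
          exact hball
        have hre : C' * r ^ e ≤ 1 - g k := by
          refine le_trans ?_ hule
          refine mul_le_mul_of_nonneg_left ?_ hC'.le
          exact Real.rpow_le_rpow hr.le (le_trans hrk (norm_le_sqrt_sum_sq k)) he.le
        have hpos : 0 < C' * r ^ e := mul_pos hC' (Real.rpow_pos_of_pos hr e)
        have h1 : f k ≤ (C' * r ^ e)⁻¹ * g k ^ 2 := by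
          simp only [hf]
          rw [div_eq_mul_inv, mul_comm]
          exact mul_le_mul_of_nonneg_right (inv_anti₀ hpos hre) (sq_nonneg _)
        have h5 : h k = cf * g k ^ 2 := by
          simp only [hh]
          rw [Set.indicator_of_notMem hball, zero_add]
        rw [h5, hcf]
        calc f k ≤ (C' * r ^ e)⁻¹ * g k ^ 2 := h1
          _ ≤ (1 / 2 + (C' * r ^ e)⁻¹) * g k ^ 2 := by nlinarith [sq_nonneg (g k)]
  -- integrability
  have hg2int : IntegrableOn (fun k => g k ^ 2) (brillouin d) volume :=
    ContinuousOn.integrableOn_compact isCompact_Icc (hgc.pow 2).continuousOn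
  have hh0int : IntegrableOn h0 (brillouin d) volume := by
    rw [hh0]
    exact ((integrableOn_sqrtsum_rpow d hd e he hed).const_mul C'⁻¹).add
      (integrableOn_const (ne_of_lt (by rw [vol_brillouin]; exact ENNReal.pow_lt_top ENNReal.ofReal_lt_top)))
  have hhint : IntegrableOn h (brillouin d) volume := by
    rw [hh]
    exact (hh0int.integrable.indicator Metric.isOpen_ball.measurableSet).add
      (hg2int.const_mul cf)
  have hfmeas : Measurable f := by
    rw [hf]
    exact (hgc.measurable.pow_const 2).div (measurable_const.sub hgc.measurable)
  have hfint : IntegrableOn f (brillouin d) volume := by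
    refine Integrable.mono' hhint.integrable hfmeas.aestronglyMeasurable ?_
    rw [ae_restrict_iff' (measurableSet_brillouin d)]
    refine ae_of_all _ (fun k hk => ?_)
    rw [Real.norm_eq_abs, abs_of_nonneg (hfnn k hk)]
    exact hfh k hk
  -- putting it together
  have hmono : (∫ k in brillouin d, f k) ≤ ∫ k in brillouin d, h k :=
    setIntegral_mono_on hfint hhint (measurableSet_brillouin d) hfh
  have hsplit : (∫ k in brillouin d, h k)
      = (∫ k in Metric.ball 0 r ∩ brillouin d, h0 k) + cf * ((2 * π) ^ d * ∑' x, Jl x ^ 2) := by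
    rw [hh]
    rw [integral_add (hh0int.integrable.indicator Metric.isOpen_ball.measurableSet)
      (hg2int.const_mul cf)]
    congr 1
    · rw [integral_indicator Metric.isOpen_ball.measurableSet,
        Measure.restrict_restrict Metric.isOpen_ball.measurableSet]
    · rw [integral_const_mul, ← parseval d Jl hsumm heven]
  have hpi : (0:ℝ) < (2 * π) ^ d := by positivity
  rw [irIntegral]
  calc (1 / (2 * π) ^ d) * ∫ k in brillouin d, jhat d Jl k ^ 2 / (1 - jhat d Jl k)
      ≤ (1 / (2 * π) ^ d) * ∫ k in brillouin d, h k := by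
        refine mul_le_mul_of_nonneg_left ?_ (by positivity)
        exact hmono
    _ = (1 / (2 * π) ^ d) * (∫ k in Metric.ball 0 r ∩ brillouin d, h0 k)
          + cf * ∑' x, Jl x ^ 2 := by
        rw [hsplit]
        field_simp
    _ = _ := by rw [hh0, hcf, hE]

/-- Smallness of the infrared integral for asymptotically spread-out interactions
(Proposition 4.7). -/
theorem ir_integral_tendsto_zero (d : ℕ) (hd : 1 ≤ d) (J : ℝ → (Fin d → ℤ) → ℝ)
    (hzero : ∀ lam : ℝ, 0 < lam → J lam 0 = 0)
    (heven : ∀ lam : ℝ, 0 < lam → ∀ x, J lam (-x) = J lam x)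
    (hsumm : ∀ lam : ℝ, 0 < lam → Summable fun x => |J lam x|)
    (hnorm : ∀ lam : ℝ, 0 < lam → ∑' x, J lam x = 1)
    (δ C lam0 : ℝ) (hδ : 0 < δ) (hC : 0 < C) (hlam0 : 0 < lam0)
    -- (1) the infrared lower bound `1 - Ĵ_λ(k) ≥ C |k|^{d-δ}`
    (hIR : ∀ lam : ℝ, 0 < lam → lam ≤ lam0 → ∀ k ∈ brillouin d, k ≠ 0 →
      C * Real.sqrt (∑ i, k i ^ 2) ^ ((d : ℝ) - δ) ≤ 1 - jhat d (J lam) k)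
    -- (2) the ℓ² norm of `J_λ` vanishes as `λ ↓ 0`
    (hL2 : Tendsto (fun lam => ∑' x : Fin d → ℤ, J lam x ^ 2) (𝓝[>] (0 : ℝ)) (𝓝 0)) :
    Tendsto (fun lam => irIntegral d (J lam)) (𝓝[>] (0 : ℝ)) (𝓝 0) := by

  classical
  have hd1 : (1:ℝ) ≤ (d:ℝ) := by exact_mod_cast hd
  set R : ℝ := Real.sqrt d * π + 1 with hR
  have hRpos : 0 < R := by positivity
  have hER : ∀ k ∈ brillouin d, Real.sqrt (∑ i, k i ^ 2) ≤ R := by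
    intro k hk
    have h1 : (∑ i, k i ^ 2) ≤ ∑ _i : Fin d, π ^ 2 := by
      refine Finset.sum_le_sum (fun i _ => ?_)
      have hl : -π ≤ k i := hk.1 i
      have hu : k i ≤ π := hk.2 i
      exact sq_le_sq' hl hu
    calc Real.sqrt (∑ i, k i ^ 2) ≤ Real.sqrt (∑ _i : Fin d, π ^ 2) := Real.sqrt_le_sqrt h1
      _ = Real.sqrt ((d : ℝ) * π ^ 2) := by
          rw [Finset.sum_const, Finset.card_univ, Fintype.card_fin, nsmul_eq_mul]
      _ = Real.sqrt d * π := by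
          rw [Real.sqrt_mul (Nat.cast_nonneg d), Real.sqrt_sq Real.pi_pos.le]
      _ ≤ R := by rw [hR]; linarith
  set δ' : ℝ := min δ ((d:ℝ)/2) with hδ'
  have hδ'pos : 0 < δ' := lt_min hδ (by linarith)
  have hδ'le : δ' ≤ δ := min_le_left _ _
  have hδ'half : δ' ≤ (d:ℝ)/2 := min_le_right _ _
  set e : ℝ := (d:ℝ) - δ' with hedef
  have hepos : 0 < e := by rw [hedef]; linarith
  have hed : e < (d:ℝ) := by rw [hedef]; linarith
  set C' : ℝ := C * R ^ (δ' - δ) with hC'def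
  have hC'pos : 0 < C' := mul_pos hC (Real.rpow_pos_of_pos hRpos _)
  have hIR' : ∀ lam : ℝ, 0 < lam → lam ≤ lam0 → ∀ k ∈ brillouin d, k ≠ 0 →
      C' * Real.sqrt (∑ i, k i ^ 2) ^ e ≤ 1 - jhat d (J lam) k := by
    intro lam h1 h2 k hk hk0
    have hEpos : 0 < Real.sqrt (∑ i, k i ^ 2) := sqrtsum_pos hk0
    have h3 : R ^ (δ' - δ) ≤ Real.sqrt (∑ i, k i ^ 2) ^ (δ' - δ) :=
      Real.rpow_le_rpow_of_nonpos hEpos (hER k hk) (by linarith)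
    have h4 : Real.sqrt (∑ i, k i ^ 2) ^ (δ' - δ) * Real.sqrt (∑ i, k i ^ 2) ^ e
        = Real.sqrt (∑ i, k i ^ 2) ^ ((d:ℝ) - δ) := by
      rw [← Real.rpow_add hEpos]
      congr 1
      rw [hedef]; ring
    have key : C' * Real.sqrt (∑ i, k i ^ 2) ^ e
        ≤ C * Real.sqrt (∑ i, k i ^ 2) ^ ((d:ℝ) - δ) := by
      calc C' * Real.sqrt (∑ i, k i ^ 2) ^ e
          = C * (R ^ (δ' - δ) * Real.sqrt (∑ i, k i ^ 2) ^ e) := by rw [hC'def]; ring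
        _ ≤ C * (Real.sqrt (∑ i, k i ^ 2) ^ (δ' - δ) * Real.sqrt (∑ i, k i ^ 2) ^ e) :=
            mul_le_mul_of_nonneg_left
              (mul_le_mul_of_nonneg_right h3 (Real.rpow_nonneg hEpos.le _)) hC.le
        _ = C * Real.sqrt (∑ i, k i ^ 2) ^ ((d:ℝ) - δ) := by rw [h4]
    exact le_trans key (hIR lam h1 h2 k hk hk0)
  set h0 : (Fin d → ℝ) → ℝ :=
    fun k => C'⁻¹ * Real.sqrt (∑ i, k i ^ 2) ^ (-e) + 3 / 2 with hh0
  have hh0int : IntegrableOn h0 (brillouin d) volume := by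
    rw [hh0]
    exact ((integrableOn_sqrtsum_rpow d hd e hepos hed).const_mul C'⁻¹).add
      (integrableOn_const (ne_of_lt (by
        rw [vol_brillouin]
        exact ENNReal.pow_lt_top ENNReal.ofReal_lt_top)))
  have hh0nn : ∀ k, 0 ≤ h0 k := by
    intro k
    rw [hh0]
    have h1 : 0 ≤ Real.sqrt (∑ i, k i ^ 2) ^ (-e) := Real.rpow_nonneg (Real.sqrt_nonneg _) _
    have h2 : 0 ≤ C'⁻¹ := inv_nonneg.2 hC'pos.le
    nlinarith
  have hA := tendsto_setIntegral_small_ball d hd h0 hh0int hh0nn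
  rw [Metric.tendsto_nhds]
  intro ε hε
  have hA' : Tendsto (fun n : ℕ =>
      (1 / (2 * π) ^ d) * ∫ k in Metric.ball 0 (1 / (n + 1)) ∩ brillouin d, h0 k)
      atTop (𝓝 0) := by
    have := hA.const_mul (1 / (2 * π) ^ d)
    simpa using this
  obtain ⟨n, hn⟩ := (hA'.eventually_lt_const (show (0:ℝ) < ε / 2 by linarith)).exists
  set r : ℝ := 1 / ((n:ℝ) + 1) with hrdef
  have hrpos : 0 < r := by rw [hrdef]; positivity
  set B : ℝ := 1 / 2 + (C' * r ^ e)⁻¹ with hBdef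
  have hBpos : 0 < B := by
    have : 0 < (C' * r ^ e)⁻¹ :=
      inv_pos.2 (mul_pos hC'pos (Real.rpow_pos_of_pos hrpos e))
    rw [hBdef]; linarith
  have hev1 : ∀ᶠ lam in 𝓝[>] (0:ℝ), lam ∈ Ioc 0 lam0 :=
    Ioc_mem_nhdsGT_of_mem ⟨le_refl 0, hlam0⟩
  have hev2 : ∀ᶠ lam in 𝓝[>] (0:ℝ), dist (∑' x, J lam x ^ 2) 0 < ε / (2 * B) :=
    Metric.tendsto_nhds.1 hL2 _ (by positivity)
  filter_upwards [hev1, hev2] with lam hmem hS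
  rw [Real.dist_eq, sub_zero]
  have h0lam : 0 < lam := hmem.1
  have hlelam : lam ≤ lam0 := hmem.2
  have hIRlam := hIR' lam h0lam hlelam
  have hnonneg := irIntegral_nonneg d (J lam) (hnorm lam h0lam) e C' hC'pos hIRlam
  rw [abs_of_nonneg hnonneg]
  have hkey := key_bound d hd (J lam) (hsumm lam h0lam) (hnorm lam h0lam)
    (heven lam h0lam) e C' hepos hed hC'pos hIRlam r hrpos
  have e1 : (1 / (2 * π) ^ d) * (∫ k in Metric.ball 0 r ∩ brillouin d, h0 k) < ε / 2 := hn
  have hSlt : (∑' x, J lam x ^ 2) < ε / (2 * B) := by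
    rw [Real.dist_eq, sub_zero] at hS
    exact lt_of_le_of_lt (le_abs_self _) hS
  have e2 : B * (∑' x, J lam x ^ 2) < ε / 2 := by
    have h5 := mul_lt_mul_of_pos_left hSlt hBpos
    have h6 : B * (ε / (2 * B)) = ε / 2 := by
      field_simp
    rw [h6] at h5
    exact h5
  have hfinal : irIntegral d (J lam)
      ≤ (1 / (2 * π) ^ d) * (∫ k in Metric.ball 0 r ∩ brillouin d, h0 k)
        + B * (∑' x, J lam x ^ 2) := hkey
  linarith
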